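/- arXiv:1909.12787 — 2 statements merged into one kernel-verified Lean document; each statement's English description precedes it below -/
import Mathlib

section
/- Let S be a Cu-semigroup satisfying O6, and let x, y ∈ S. Then the intersection ⟨x⟩ ∩ ⟨y⟩ of the ideals generated by x and by y equals the ideal generated by the set { z ∈ S : z ≤ x and z ≤ y }. -/
open scoped ENNReal

namespace CuFormal

variable {S : Type*} [AddCommMonoid S] [PartialOrder S]

/-- The algebra-free way-below relation: `x ≪ y` iff whenever `y ≤ sup yₙ` for an
increasing sequence with supremum, then `x ≤ yₙ` for some `n`. -/
def WayBelow (x y : S) : Prop :=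
  ∀ f : ℕ → S, Monotone f → ∀ s : S, IsLUB (Set.range f) s → y ≤ s → ∃ n, x ≤ f n

/-- Positively ordered monoid with addition monotone. -/
def PosOrdered : Prop :=
  (∀ x : S, (0 : S) ≤ x) ∧ ∀ a b c : S, b ≤ c → a + b ≤ a + c

/-- O1: every increasing sequence has a supremum. -/
def AxO1 : Prop := ∀ f : ℕ → S, Monotone f → ∃ s : S, IsLUB (Set.range f) s

/-- O2: every element is the supremum of a ≪-increasing sequence. -/
def AxO2 : Prop := ∀ x : S, ∃ f : ℕ → S, Monotone f ∧
  (∀ n, WayBelow (f n) (f (n + 1))) ∧ IsLUB (Set.range f) x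

/-- O3 -/
def AxO3 : Prop := ∀ x₁ y₁ x₂ y₂ : S,
  WayBelow x₁ y₁ → WayBelow x₂ y₂ → WayBelow (x₁ + x₂) (y₁ + y₂)

/-- O4 -/
def AxO4 : Prop := ∀ f g : ℕ → S, Monotone f → Monotone g →
  ∀ a b : S, IsLUB (Set.range f) a → IsLUB (Set.range g) b →
    IsLUB (Set.range fun n => f n + g n) (a + b)

/-- A Cu-semigroup: positively ordered monoid satisfying O1–O4. -/
def CuSemigroup : Prop :=
  PosOrdered (S := S) ∧ AxO1 (S := S) ∧ AxO2 (S := S) ∧ AxO3 (S := S) ∧ AxO4 (S := S)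

/-- O5 -/
def AxO5 : Prop := ∀ x' x y w' w : S, WayBelow x' x → x ≤ y → WayBelow w' w →
  x + w ≤ y → ∃ z : S, x' + z ≤ y ∧ y ≤ x + z ∧ WayBelow w' z

/-- O6 -/
def AxO6 : Prop := ∀ x' x y z : S, WayBelow x' x → x ≤ y + z →
  ∃ y' z' : S, x' ≤ y' + z' ∧ y' ≤ x ∧ y' ≤ y ∧ z' ≤ x ∧ z' ≤ z

/-- O7 -/
def AxO7 : Prop := ∀ x₁' x₁ x₂' x₂ w : S,
  WayBelow x₁' x₁ → x₁ ≤ w → WayBelow x₂' x₂ → x₂ ≤ w →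
  ∃ x : S, WayBelow x₁' x ∧ WayBelow x₂' x ∧ x ≤ w ∧ x ≤ x₁ + x₂

/-- An ideal: a downward hereditary subsemigroup closed under suprema of increasing
sequences. -/
def IsIdeal (J : Set S) : Prop :=
  (0 : S) ∈ J ∧ (∀ x y : S, x ∈ J → y ∈ J → x + y ∈ J) ∧
  (∀ x y : S, y ∈ J → x ≤ y → x ∈ J) ∧
  (∀ f : ℕ → S, Monotone f → (∀ n, f n ∈ J) →
    ∀ s : S, IsLUB (Set.range f) s → s ∈ J)

/-- Countably based. -/
def CountablyBased : Prop := ∃ B : Set S, B.Countable ∧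
  ∀ x : S, ∃ f : ℕ → S, (∀ n, f n ∈ B) ∧ Monotone f ∧
    (∀ n, WayBelow (f n) (f (n + 1))) ∧ IsLUB (Set.range f) x

/-- A functional on `S`: preserves `0`, addition, order and suprema of increasing
sequences. -/
def IsFunctional (l : S → ℝ≥0∞) : Prop :=
  l 0 = 0 ∧ (∀ x y : S, l (x + y) = l x + l y) ∧ Monotone l ∧
  (∀ f : ℕ → S, Monotone f → ∀ s : S, IsLUB (Set.range f) s → l s = ⨆ n, l (f n))

/-- `(x̂ ∧ ŷ)(λ) = inf { λ₁(x) + λ₂(y) : λ = λ₁ + λ₂ }`. -/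
noncomputable def hatInf (x y : S) (l : S → ℝ≥0∞) : ℝ≥0∞ :=
  sInf {t : ℝ≥0∞ | ∃ l₁ l₂ : S → ℝ≥0∞, IsFunctional l₁ ∧ IsFunctional l₂ ∧
    (∀ u : S, l u = l₁ u + l₂ u) ∧ t = l₁ x + l₂ y}

/-- Edwards' condition for the functional `l`. -/
def EdwardsFor (l : S → ℝ≥0∞) : Prop := ∀ x y : S,
  hatInf x y l = sSup {t : ℝ≥0∞ | ∃ z : S, z ≤ x ∧ z ≤ y ∧ t = l z}

/-- The ideal generated by a subset. -/
def idealGen (X : Set S) : Set S := ⋂₀ {J : Set S | IsIdeal J ∧ X ⊆ J}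


section Aux

lemma wb_le {a b : S} (h : WayBelow a b) : a ≤ b := by
  obtain ⟨n, hn⟩ := h (fun _ => b) monotone_const b
    ⟨by rintro _ ⟨n, rfl⟩; exact le_rfl, fun c hc => hc ⟨0, rfl⟩⟩ le_rfl
  exact hn

lemma le_wb {a b c : S} (hab : a ≤ b) (h : WayBelow b c) : WayBelow a c :=
  fun f hf s hs hcs => (h f hf s hs hcs).imp fun _ hn => hab.trans hn

lemma wb_le_right {a b c : S} (h : WayBelow a b) (hbc : b ≤ c) : WayBelow a c :=
  fun f hf s hs hcs => h f hf s hs (hbc.trans hcs)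

lemma wb_interp (hO2 : AxO2 (S := S)) {a b : S} (h : WayBelow a b) :
    ∃ c, WayBelow a c ∧ WayBelow c b := by
  obtain ⟨f, hf, hwb, hlub⟩ := hO2 b
  obtain ⟨n, hn⟩ := h f hf b hlub le_rfl
  exact ⟨f (n + 1), le_wb hn (hwb n),
    wb_le_right (hwb (n + 1)) (hlub.1 ⟨n + 2, rfl⟩)⟩

lemma add_le_add'' (hP : PosOrdered (S := S)) {a b c d : S}
    (h1 : a ≤ c) (h2 : b ≤ d) : a + b ≤ c + d := by
  calc a + b ≤ a + d := hP.2 a b d h2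
    _ = d + a := add_comm _ _
    _ ≤ d + c := hP.2 d a c h1
    _ = c + d := add_comm _ _

lemma isIdeal_idealGen (X : Set S) : IsIdeal (idealGen X) := by
  refine ⟨?_, ?_, ?_, ?_⟩
  · exact Set.mem_sInter.2 fun J hJ => hJ.1.1
  · intro u v hu hv
    exact Set.mem_sInter.2 fun J hJ => hJ.1.2.1 u v (hu J hJ) (hv J hJ)
  · intro u v hv huv
    exact Set.mem_sInter.2 fun J hJ => hJ.1.2.2.1 u v (hv J hJ) huv
  · intro f hf hfn s hs
    exact Set.mem_sInter.2 fun J hJ => hJ.1.2.2.2 f hf (fun n => hfn n J hJ) s hs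

lemma subset_idealGen (X : Set S) : X ⊆ idealGen X :=
  fun _ hz => Set.mem_sInter.2 fun _ hJ => hJ.2 hz

lemma idealGen_subset {X J : Set S} (hJ : IsIdeal J) (hXJ : X ⊆ J) :
    idealGen X ⊆ J := fun w hw => Set.mem_sInter.1 hw J ⟨hJ, hXJ⟩

/-- If every way-below approximant of `w` lies in the ideal `J`, so does `w`. -/
lemma mem_of_forall_wb (hO2 : AxO2 (S := S)) {J : Set S} (hJ : IsIdeal J) {w : S}
    (h : ∀ a, WayBelow a w → a ∈ J) : w ∈ J := by
  obtain ⟨f, hf, hwb, hlub⟩ := hO2 w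
  exact hJ.2.2.2 f hf
    (fun n => h (f n) (wb_le_right (hwb n) (hlub.1 ⟨n + 1, rfl⟩))) w hlub

/-- The "bounded by multiples of `x`" ideal. -/
def boundIdeal (x : S) : Set S := {w : S | ∀ a, WayBelow a w → ∃ n : ℕ, a ≤ n • x}

lemma isIdeal_boundIdeal (hCu : CuSemigroup (S := S)) (x : S) :
    IsIdeal (boundIdeal x) := by
  obtain ⟨hP, _hO1, hO2, _hO3, hO4⟩ := hCu
  refine ⟨?_, ?_, ?_, ?_⟩
  · intro a ha
    exact ⟨0, le_trans (wb_le ha) (by rw [zero_nsmul])⟩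
  · intro u v hu hv a ha
    obtain ⟨f, hf, hfwb, hflub⟩ := hO2 u
    obtain ⟨g, hg, hgwb, hglub⟩ := hO2 v
    obtain ⟨n, hn⟩ := ha (fun n => f n + g n)
      (fun i j hij => add_le_add'' hP (hf hij) (hg hij)) (u + v)
      (hO4 f g hf hg u v hflub hglub) le_rfl
    obtain ⟨n₁, hn₁⟩ := hu (f n) (wb_le_right (hfwb n) (hflub.1 ⟨n + 1, rfl⟩))
    obtain ⟨n₂, hn₂⟩ := hv (g n) (wb_le_right (hgwb n) (hglub.1 ⟨n + 1, rfl⟩))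
    exact ⟨n₁ + n₂, hn.trans (by rw [add_nsmul]; exact add_le_add'' hP hn₁ hn₂)⟩
  · intro u v hv huv a ha
    exact hv a (wb_le_right ha huv)
  · intro f hf hfn s hs a ha
    obtain ⟨c, hac, hcs⟩ := wb_interp hO2 ha
    obtain ⟨n, hn⟩ := hcs f hf s hs le_rfl
    exact hfn n a (wb_le_right hac hn)

lemma self_mem_boundIdeal (x : S) : x ∈ boundIdeal x :=
  fun a ha => ⟨1, le_trans (wb_le ha) (by rw [one_nsmul])⟩

/-- Key step 1: if `b ≤ x` and `b ≤ M • y`, every `a ≪ b` lies in the generated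
ideal. -/
lemma key1 (hCu : CuSemigroup (S := S)) (hO6 : AxO6 (S := S)) (x y : S) :
    ∀ M : ℕ, ∀ b : S, b ≤ x → b ≤ M • y → ∀ a, WayBelow a b →
      a ∈ idealGen {z : S | z ≤ x ∧ z ≤ y} := by
  have hJ := isIdeal_idealGen (S := S) {z : S | z ≤ x ∧ z ≤ y}
  intro M
  induction M with
  | zero =>
    intro b _ hb0 a ha
    exact hJ.2.2.1 a 0 hJ.1 (le_trans (wb_le ha) (by rwa [zero_nsmul] at hb0))
  | succ M ih =>
    intro b hbx hby a ha
    rw [succ_nsmul] at hby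
    obtain ⟨y', z', hsum, hy'b, hy'My, hz'b, hz'y⟩ := hO6 a b (M • y) y ha hby
    have hy'J : y' ∈ idealGen {z : S | z ≤ x ∧ z ≤ y} :=
      mem_of_forall_wb hCu.2.2.1 hJ fun a' ha' =>
        ih y' (hy'b.trans hbx) hy'My a' ha'
    have hz'J : z' ∈ idealGen {z : S | z ≤ x ∧ z ≤ y} :=
      subset_idealGen _ ⟨hz'b.trans hbx, hz'y⟩
    exact hJ.2.2.1 a (y' + z') (hJ.2.1 y' z' hy'J hz'J) hsum

/-- Key step 2: if `b ≤ N • x` and `b ≤ M • y`, every `a ≪ b` lies in the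
generated ideal. -/
lemma key2 (hCu : CuSemigroup (S := S)) (hO6 : AxO6 (S := S)) (x y : S) :
    ∀ N M : ℕ, ∀ b : S, b ≤ N • x → b ≤ M • y → ∀ a, WayBelow a b →
      a ∈ idealGen {z : S | z ≤ x ∧ z ≤ y} := by
  have hJ := isIdeal_idealGen (S := S) {z : S | z ≤ x ∧ z ≤ y}
  intro N
  induction N with
  | zero =>
    intro M b hb0 _ a ha
    exact hJ.2.2.1 a 0 hJ.1 (le_trans (wb_le ha) (by rwa [zero_nsmul] at hb0))
  | succ N ih =>
    intro M b hbx hby a ha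
    rw [succ_nsmul] at hbx
    obtain ⟨y', z', hsum, hy'b, hy'Nx, hz'b, hz'x⟩ := hO6 a b (N • x) x ha hbx
    have hy'J : y' ∈ idealGen {z : S | z ≤ x ∧ z ≤ y} :=
      mem_of_forall_wb hCu.2.2.1 hJ fun a' ha' =>
        ih M y' hy'Nx (hy'b.trans hby) a' ha'
    have hz'J : z' ∈ idealGen {z : S | z ≤ x ∧ z ≤ y} :=
      mem_of_forall_wb hCu.2.2.1 hJ fun a' ha' =>
        key1 hCu hO6 x y M z' hz'x (hz'b.trans hby) a' ha'
    exact hJ.2.2.1 a (y' + z') (hJ.2.1 y' z' hy'J hz'J) hsum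

end Aux

/-- in a Cu-semigroup satisfying O6,
`⟨x⟩ ∩ ⟨y⟩` is the ideal generated by `{z : z ≤ x, z ≤ y}`. -/
theorem stmt12 {S : Type*} [AddCommMonoid S] [PartialOrder S]
    (hCu : CuSemigroup (S := S)) (hO6 : AxO6 (S := S)) (x y : S) :
    idealGen {x} ∩ idealGen {y} = idealGen {z : S | z ≤ x ∧ z ≤ y} := by
  have hJ := isIdeal_idealGen (S := S) {z : S | z ≤ x ∧ z ≤ y}
  have hO2 := hCu.2.2.1
  apply Set.eq_of_subset_of_subset
  · rintro w ⟨hwx, hwy⟩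
    -- `⟨x⟩ ⊆ boundIdeal x`
    have hx : w ∈ boundIdeal x :=
      idealGen_subset (isIdeal_boundIdeal hCu x)
        (Set.singleton_subset_iff.2 (self_mem_boundIdeal x)) hwx
    have hy : w ∈ boundIdeal y :=
      idealGen_subset (isIdeal_boundIdeal hCu y)
        (Set.singleton_subset_iff.2 (self_mem_boundIdeal y)) hwy
    refine mem_of_forall_wb hO2 hJ fun a ha => ?_
    obtain ⟨b, hab, hbw⟩ := wb_interp hO2 ha
    obtain ⟨N, hN⟩ := hx b hbw
    obtain ⟨M, hM⟩ := hy b hbw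
    exact key2 hCu hO6 x y N M b hN hM a hab
  · refine Set.subset_inter ?_ ?_
    · refine idealGen_subset (isIdeal_idealGen {x}) fun z hz => ?_
      exact (isIdeal_idealGen {x}).2.2.1 z x (subset_idealGen {x} rfl) hz.1
    · refine idealGen_subset (isIdeal_idealGen {y}) fun z hz => ?_
      exact (isIdeal_idealGen {y}).2.2.1 z y (subset_idealGen {y} rfl) hz.2

end CuFormal
end

section
/- Let S be a Cu-semigroup satisfying O5 and O6, let λ ∈ F(S) be a functional for which S satisfies Edwards' condition, and let x, y ∈ S. Then there exists z ∈ S with z ≤ x, z ≤ y, and (x̂ ∧ ŷ)(λ) = λ(z); that is, the supremum in Edwards' condition is attained. Moreover, given z₀' ≪ z₀ ≤ x, y, the element z can be chosen with z₀' ≪ z. -/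
open scoped ENNReal

namespace CuFormal

variable {S : Type*} [AddCommMonoid S] [PartialOrder S]

theorem wayBelow_le' {S : Type*} [AddCommMonoid S] [PartialOrder S] {a b : S}
    (h : WayBelow a b) : a ≤ b := by
  have hlub : IsLUB (Set.range fun _ : ℕ => b) b := by
    simpa [Set.range_const] using (isLUB_singleton : IsLUB {b} b)
  obtain ⟨n, hn⟩ := h (fun _ => b) monotone_const b hlub le_rfl
  exact hn

theorem le_wayBelow {S : Type*} [AddCommMonoid S] [PartialOrder S] {a b c : S}
    (hab : a ≤ b) (hbc : WayBelow b c) : WayBelow a c :=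
  fun f hf s hs hcs => (hbc f hf s hs hcs).imp fun _ hn => hab.trans hn

theorem wayBelow_le_right {S : Type*} [AddCommMonoid S] [PartialOrder S] {a b c : S}
    (hab : WayBelow a b) (hbc : b ≤ c) : WayBelow a c :=
  fun f hf s hs hcs => hab f hf s hs (hbc.trans hcs)

theorem wayBelow_zero {S : Type*} [AddCommMonoid S] [PartialOrder S]
    (hpos : PosOrdered (S := S)) (z : S) : WayBelow (0 : S) z :=
  fun f _ _ _ _ => ⟨0, hpos.1 (f 0)⟩

theorem stepLemma {S : Type*} [AddCommMonoid S] [PartialOrder S]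
    (hpos : PosOrdered (S := S)) (hO2 : AxO2 (S := S)) (hO5 : AxO5 (S := S))
    {l : S → ℝ≥0∞} (hl : IsFunctional l) (hEd : EdwardsFor l) (x y : S)
    (p q : S) (hpq : WayBelow p q) (hqx : q ≤ x) (hqy : q ≤ y)
    (M : ℝ≥0∞) (hM : M < hatInf x y l) (hMtop : M ≠ ⊤) :
    ∃ p' q' : S, WayBelow p p' ∧ WayBelow p' q' ∧ q' ≤ x ∧ q' ≤ y ∧ M ≤ l p' := by
  obtain ⟨hl0, hladd, hlmono, hlsup⟩ := hl
  obtain ⟨c, hcmono, hcwb, hclub⟩ := hO2 q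
  have hcq : ∀ k, c k ≤ q := fun k => hclub.1 ⟨k, rfl⟩
  obtain ⟨k₀, hk₀⟩ := hpq c hcmono q hclub le_rfl
  by_cases hbig : ∃ k, M ≤ l (c k)
  · obtain ⟨k₁, hk₁⟩ := hbig
    refine ⟨c (max k₁ (k₀ + 1)), q, ?_, ?_, hqx, hqy, ?_⟩
    · exact le_wayBelow hk₀ (wayBelow_le_right (hcwb k₀) (hcmono (le_max_right k₁ (k₀ + 1))))
    · exact wayBelow_le_right (hcwb _) (hcq _)
    · exact hk₁.trans (hlmono (hcmono (le_max_left _ _)))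
  · push_neg at hbig
    have hlq : l q = ⨆ k, l (c k) := hlsup c hcmono q hclub
    have hlqM : l q ≤ M := hlq ▸ iSup_le fun k => (hbig k).le
    have hlqtop : l q ≠ ⊤ := (hlqM.trans_lt hMtop.lt_top).ne
    obtain ⟨u, hMu, huσ⟩ := exists_between hM
    have hutop : u ≠ ⊤ := (huσ.trans_le le_top).ne
    set ε := u - M with hεdef
    have hε0 : ε ≠ 0 := by simpa [hεdef, tsub_eq_zero_iff_le] using hMu.not_ge
    have hεtop : ε ≠ ⊤ := (tsub_le_self.trans_lt hutop.lt_top).ne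
    have hMε : M + ε = u := add_tsub_cancel_of_le hMu.le
    have hex : ∃ k₁, l q ≤ l (c k₁) + ε := by
      by_cases h0 : l q ≤ ε
      · exact ⟨0, h0.trans le_add_self⟩
      · push_neg at h0
        have hq0 : l q ≠ 0 := fun h => by simp [h] at h0
        have h1 : l q - ε < ⨆ k, l (c k) := by
          rw [← hlq]; exact ENNReal.sub_lt_self hlqtop hq0 hε0
        obtain ⟨k₁, hk₁⟩ := lt_iSup_iff.mp h1
        exact ⟨k₁, ((ENNReal.sub_lt_iff_lt_right hεtop h0.le).mp hk₁).le⟩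
    obtain ⟨k₁, hk₁⟩ := hex
    set K := max k₁ (k₀ + 1) with hK
    have hrr' : l (c (K + 1)) ≤ l (c K) + ε :=
      (hlmono (hcq (K + 1))).trans
        (hk₁.trans (add_le_add_left (hlmono (hcmono (le_max_left _ _))) ε))
    have hwb0 : WayBelow (0 : S) (0 : S) := wayBelow_zero hpos 0
    have hrx : c (K + 1) ≤ x := (hcq _).trans hqx
    have hry : c (K + 1) ≤ y := (hcq _).trans hqy
    obtain ⟨a, haux1, hxra, -⟩ :=
      hO5 (c K) (c (K + 1)) x 0 0 (hcwb K) hrx hwb0 (by simpa using hrx)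
    obtain ⟨b, haux2, hyrb, -⟩ :=
      hO5 (c K) (c (K + 1)) y 0 0 (hcwb K) hry hwb0 (by simpa using hry)
    have hkey : hatInf x y l ≤ l (c (K + 1)) + hatInf a b l := by
      have h1 : hatInf x y l - l (c (K + 1)) ≤ hatInf a b l := by
        refine le_sInf ?_
        rintro t ⟨l₁, l₂, hl₁, hl₂, hsum, rfl⟩
        rw [tsub_le_iff_left]
        have hx1 : l₁ x ≤ l₁ (c (K + 1)) + l₁ a := (hl₁.2.2.1 hxra).trans_eq (hl₁.2.1 _ _)
        have hy1 : l₂ y ≤ l₂ (c (K + 1)) + l₂ b := (hl₂.2.2.1 hyrb).trans_eq (hl₂.2.1 _ _)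
        calc hatInf x y l ≤ l₁ x + l₂ y := sInf_le ⟨l₁, l₂, hl₁, hl₂, hsum, rfl⟩
          _ ≤ (l₁ (c (K + 1)) + l₁ a) + (l₂ (c (K + 1)) + l₂ b) := add_le_add hx1 hy1
          _ = (l₁ (c (K + 1)) + l₂ (c (K + 1))) + (l₁ a + l₂ b) := by ring
          _ = l (c (K + 1)) + (l₁ a + l₂ b) := by rw [hsum]
      calc hatInf x y l ≤ hatInf x y l - l (c (K + 1)) + l (c (K + 1)) := le_tsub_add
        _ ≤ hatInf a b l + l (c (K + 1)) := add_le_add_left h1 _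
        _ = l (c (K + 1)) + hatInf a b l := add_comm _ _
    have hS : (0 : ℝ≥0∞) ∈ {t : ℝ≥0∞ | ∃ z : S, z ≤ a ∧ z ≤ b ∧ t = l z} :=
      ⟨0, hpos.1 a, hpos.1 b, hl0.symm⟩
    have hlt : M + ε < l (c (K + 1)) +
        sSup {t : ℝ≥0∞ | ∃ z : S, z ≤ a ∧ z ≤ b ∧ t = l z} := by
      rw [← hEd a b]
      exact hMε.trans_lt (huσ.trans_le hkey)
    rw [ENNReal.add_sSup ⟨0, hS⟩] at hlt
    simp only [lt_iSup_iff] at hlt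
    obtain ⟨t, ⟨w, hwa, hwb, rfl⟩, hlt3⟩ := hlt
    have hlt4 : M + ε < (l (c K) + l w) + ε := by
      refine hlt3.trans_le ?_
      calc l (c (K + 1)) + l w ≤ (l (c K) + ε) + l w := add_le_add_left hrr' _
        _ = (l (c K) + l w) + ε := by ring
    have hMv : M < l (c K + w) := by
      rw [hladd]; exact (ENNReal.add_lt_add_iff_right hεtop).mp hlt4
    have hr'v : c K ≤ c K + w := by
      have := hpos.2 (c K) 0 w (hpos.1 w); simpa using this
    have hvx : c K + w ≤ x := le_trans (hpos.2 (c K) w a hwa) haux1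
    have hvy : c K + w ≤ y := le_trans (hpos.2 (c K) w b hwb) haux2
    have hpv : WayBelow p (c K + w) :=
      le_wayBelow hk₀ (wayBelow_le_right (hcwb k₀)
        ((hcmono (le_max_right k₁ (k₀ + 1))).trans hr'v))
    obtain ⟨d, hdmono, hdwb, hdlub⟩ := hO2 (c K + w)
    have hdv : ∀ j, d j ≤ c K + w := fun j => hdlub.1 ⟨j, rfl⟩
    obtain ⟨j₀, hj₀⟩ := hpv d hdmono _ hdlub le_rfl
    have hlv : M < ⨆ j, l (d j) := by
      rw [← hlsup d hdmono _ hdlub]; exact hMv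
    obtain ⟨j₁, hj₁⟩ := lt_iSup_iff.mp hlv
    refine ⟨d (max j₁ (j₀ + 1)), c K + w, ?_, ?_, hvx, hvy, ?_⟩
    · exact le_wayBelow hj₀ (wayBelow_le_right (hdwb j₀) (hdmono (le_max_right j₁ (j₀ + 1))))
    · exact wayBelow_le_right (hdwb _) (hdv _)
    · exact hj₁.le.trans (hlmono (hdmono (le_max_left _ _)))

theorem exists_Mseq (σ : ℝ≥0∞) (hσ : σ ≠ 0) :
    ∃ M : ℕ → ℝ≥0∞, (∀ n, M n < σ) ∧ σ ≤ ⨆ n, M n := by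
  obtain ⟨u, hmono, hmem, htend⟩ :=
    exists_seq_strictMono_tendsto' (pos_iff_ne_zero.mpr hσ : (0 : ℝ≥0∞) < σ)
  exact ⟨u, fun n => (hmem n).2, (iSup_eq_of_tendsto hmono.monotone htend).ge⟩

theorem attain {S : Type*} [AddCommMonoid S] [PartialOrder S]
    (hCu : CuSemigroup (S := S)) (hO5 : AxO5 (S := S))
    {l : S → ℝ≥0∞} (hl : IsFunctional l) (hEd : EdwardsFor l) (x y : S)
    (z₀' z₀ : S) (h1 : WayBelow z₀' z₀) (h2 : z₀ ≤ x) (h3 : z₀ ≤ y) :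
    ∃ z : S, WayBelow z₀' z ∧ z ≤ x ∧ z ≤ y ∧ hatInf x y l = l z := by
  obtain ⟨hpos, hO1, hO2, hO3, hO4⟩ := hCu
  by_cases hσ0 : hatInf x y l = 0
  · refine ⟨z₀, h1, h2, h3, ?_⟩
    have hle : l z₀ ≤ hatInf x y l := by
      rw [hEd x y]; exact le_sSup ⟨z₀, h2, h3, rfl⟩
    rw [hσ0]; rw [hσ0] at hle
    exact (le_antisymm hle zero_le).symm
  · obtain ⟨M, hMlt, hMsup⟩ := exists_Mseq _ hσ0
    have hMtop : ∀ n, M n ≠ ⊤ := fun n => ((hMlt n).trans_le le_top).ne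
    have step : ∀ (n : ℕ) (s : S × S), (WayBelow s.1 s.2 ∧ s.2 ≤ x ∧ s.2 ≤ y) →
        ∃ s' : S × S, (WayBelow s'.1 s'.2 ∧ s'.2 ≤ x ∧ s'.2 ≤ y) ∧
          WayBelow s.1 s'.1 ∧ M n ≤ l s'.1 := by
      intro n s hs
      obtain ⟨p', q', ha, hb, hc, hd, he⟩ :=
        stepLemma hpos hO2 hO5 hl hEd x y s.1 s.2 hs.1 hs.2.1 hs.2.2 (M n) (hMlt n) (hMtop n)
      exact ⟨(p', q'), ⟨hb, hc, hd⟩, ha, he⟩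
    choose! f hf1 hf2 hf3 using step
    set seq : ℕ → S × S := fun n => Nat.rec (z₀', z₀) (fun k ih => f k ih) n with hseq
    have hGood : ∀ n, WayBelow (seq n).1 (seq n).2 ∧ (seq n).2 ≤ x ∧ (seq n).2 ≤ y := by
      intro n
      induction n with
      | zero => exact ⟨h1, h2, h3⟩
      | succ k ih => exact hf1 k (seq k) ih
    have hstepWB : ∀ n, WayBelow (seq n).1 (seq (n + 1)).1 := fun n => hf2 n (seq n) (hGood n)
    have hstepM : ∀ n, M n ≤ l (seq (n + 1)).1 := fun n => hf3 n (seq n) (hGood n)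
    have hpmono : Monotone fun n => (seq n).1 :=
      monotone_nat_of_le_succ fun n => wayBelow_le' (hstepWB n)
    obtain ⟨z, hz⟩ := hO1 _ hpmono
    have hzx : z ≤ x := hz.2 (by
      rintro a ⟨n, rfl⟩
      exact (wayBelow_le' (hGood n).1).trans (hGood n).2.1)
    have hzy : z ≤ y := hz.2 (by
      rintro a ⟨n, rfl⟩
      exact (wayBelow_le' (hGood n).1).trans (hGood n).2.2)
    have hlz : l z = ⨆ n, l ((seq n).1) := hl.2.2.2 _ hpmono z hz
    have hσle : hatInf x y l ≤ l z := by
      rw [hlz]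
      exact hMsup.trans (iSup_le fun n => le_iSup_of_le (n + 1) (hstepM n))
    have hlez : l z ≤ hatInf x y l := by
      rw [hEd x y]; exact le_sSup ⟨z, hzx, hzy, rfl⟩
    refine ⟨z, ?_, hzx, hzy, le_antisymm hσle hlez⟩
    exact wayBelow_le_right (hstepWB 0) (hz.1 ⟨1, rfl⟩)

/-- the supremum in Edwards' condition is attained, and can moreover be
attained above any `z₀' ≪ z₀ ≤ x, y`. -/
theorem stmt15 {S : Type*} [AddCommMonoid S] [PartialOrder S]
    (hCu : CuSemigroup (S := S)) (hO5 : AxO5 (S := S)) (hO6 : AxO6 (S := S))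
    (l : S → ℝ≥0∞) (hl : IsFunctional l) (hEd : EdwardsFor l) (x y : S) :
    (∃ z : S, z ≤ x ∧ z ≤ y ∧ hatInf x y l = l z) ∧
    (∀ z₀' z₀ : S, WayBelow z₀' z₀ → z₀ ≤ x → z₀ ≤ y →
      ∃ z : S, WayBelow z₀' z ∧ z ≤ x ∧ z ≤ y ∧ hatInf x y l = l z) := by
  constructor
  · obtain ⟨z, -, hzx, hzy, he⟩ := attain hCu hO5 hl hEd x y 0 0
      (wayBelow_zero hCu.1 0) (hCu.1.1 x) (hCu.1.1 y)
    exact ⟨z, hzx, hzy, he⟩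
  · intro z₀' z₀ h1 h2 h3
    exact attain hCu hO5 hl hEd x y z₀' z₀ h1 h2 h3


end CuFormal
end
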